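/- Let q ≥ 1 and let a₁, …, a_q be real numbers that are linearly independent over ℚ. Let A be the 2q×2q block-diagonal skew-symmetric matrix whose j-th 2×2 diagonal block is [[0, −a_j],[a_j, 0]], and define the linear forms C₀(x) = x₁ + x₃ + ⋯ + x_{2q−1} and C₁(x) = x₂ + x₄ + ⋯ + x_{2q} on ℝ^{2q}. Then for every nonzero x ∈ ℝ^{2q} there exists t ≥ 0 such that C₀(exp(tA)x) · C₁(exp(tA)x) > 0; in particular every nonzero orbit of ẋ = Ax leaves the cone {x : C₀(x)·C₁(x) ≤ 0}. -/

import Mathlib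

open Matrix Filter

noncomputable section

/-- The `2q×2q` block-diagonal skew-symmetric matrix whose `j`-th `2×2` diagonal block is
`[[0, -a_j],[a_j, 0]]`, indexed by `Fin q × Fin 2`. -/
def blockDiagRot {q : ℕ} (a : Fin q → ℝ) :
    Matrix (Fin q × Fin 2) (Fin q × Fin 2) ℝ :=
  Matrix.of fun p p' =>
    if p.1 = p'.1 then !![0, -(a p.1); a p.1, 0] p.2 p'.2 else 0

/-- The flow `t ↦ exp(tA)`. -/
def expFlow {q : ℕ} (a : Fin q → ℝ) (t : ℝ) :
    EuclideanSpace ℝ (Fin q × Fin 2) →L[ℝ] EuclideanSpace ℝ (Fin q × Fin 2) :=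
  NormedSpace.exp (t • LinearMap.toContinuousLinearMap
    (Matrix.toEuclideanLin (blockDiagRot a)))

/-- The linear form `C₀ : x ↦ x₁ + x₃ + ⋯ + x_{2q-1}` (sum of the first coordinates of
the `2×2` blocks). -/
def C₀fun {q : ℕ} (x : EuclideanSpace ℝ (Fin q × Fin 2)) : ℝ := ∑ j : Fin q, x (j, 0)

/-- The linear form `C₁ : x ↦ x₂ + x₄ + ⋯ + x_{2q}` (sum of the second coordinates of
the `2×2` blocks). -/
def C₁fun {q : ℕ} (x : EuclideanSpace ℝ (Fin q × Fin 2)) : ℝ := ∑ j : Fin q, x (j, 1)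


section aux
variable {q : ℕ}


/-- candidate explicit solution -/
def sol (a : Fin q → ℝ) (x : EuclideanSpace ℝ (Fin q × Fin 2)) (t : ℝ) :
    EuclideanSpace ℝ (Fin q × Fin 2) :=
  (WithLp.equiv 2 _).symm fun p =>
    ![x (p.1, 0) * Real.cos (a p.1 * t) - x (p.1, 1) * Real.sin (a p.1 * t),
      x (p.1, 0) * Real.sin (a p.1 * t) + x (p.1, 1) * Real.cos (a p.1 * t)] p.2

lemma sol_apply (a : Fin q → ℝ) (x : EuclideanSpace ℝ (Fin q × Fin 2)) (t : ℝ) (p) :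
    sol a x t p =
    ![x (p.1, 0) * Real.cos (a p.1 * t) - x (p.1, 1) * Real.sin (a p.1 * t),
      x (p.1, 0) * Real.sin (a p.1 * t) + x (p.1, 1) * Real.cos (a p.1 * t)] p.2 := rfl

lemma mulVec_blockDiagRot (a : Fin q → ℝ) (v : Fin q × Fin 2 → ℝ) (j : Fin q) (i : Fin 2) :
    ((blockDiagRot a) *ᵥ v) (j, i) =
      ![-(a j) * v (j, 1), a j * v (j, 0)] i := by
  simp only [Matrix.mulVec, dotProduct, blockDiagRot, Matrix.of_apply]
  rw [Fintype.sum_prod_type]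
  rw [Finset.sum_eq_single j]
  · fin_cases i <;> simp [Fin.sum_univ_two]
  · intro k _ hk
    simp [Ne.symm hk]
  · simp

lemma hasDerivAt_sol (a : Fin q → ℝ) (x : EuclideanSpace ℝ (Fin q × Fin 2)) (s : ℝ) :
    HasDerivAt (sol a x)
      ((LinearMap.toContinuousLinearMap (Matrix.toEuclideanLin (blockDiagRot a)))
        (sol a x s)) s := by
  set L := LinearMap.toContinuousLinearMap (Matrix.toEuclideanLin (blockDiagRot a))
  have key : ∀ p : Fin q × Fin 2, HasDerivAt (fun u => sol a x u p) ((L (sol a x s)) p) s := by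
    rintro ⟨j, i⟩
    have hL : (L (sol a x s)) (j, i) = ![-(a j) * (sol a x s (j,1)), a j * (sol a x s (j,0))] i := by
      show (Matrix.toEuclideanLin (blockDiagRot a) (sol a x s)) (j, i) = _
      rw [Matrix.toEuclideanLin_apply]
      exact mulVec_blockDiagRot a _ j i
    rw [hL]
    have hc : HasDerivAt (fun u => Real.cos (a j * u)) (-(a j * Real.sin (a j * s))) s := by
      simpa [Function.comp_def, mul_comm] using (Real.hasDerivAt_cos (a j * s)).comp s ((hasDerivAt_id s).const_mul (a j))
    have hs : HasDerivAt (fun u => Real.sin (a j * u)) (a j * Real.cos (a j * s)) s := by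
      simpa [Function.comp_def, mul_comm] using (Real.hasDerivAt_sin (a j * s)).comp s ((hasDerivAt_id s).const_mul (a j))
    fin_cases i
    · simp only [sol_apply]
      simp only [Matrix.cons_val_zero, Matrix.cons_val_one, Matrix.head_cons]
      have := ((hc.const_mul (x (j,0))).sub (hs.const_mul (x (j,1))))
      refine this.congr_deriv ?_
      norm_num
      ring
    · simp only [sol_apply]
      simp only [Matrix.cons_val_zero, Matrix.cons_val_one, Matrix.head_cons]
      have := ((hs.const_mul (x (j,0))).add (hc.const_mul (x (j,1))))
      refine this.congr_deriv ?_
      norm_num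
      ring
  have key' : HasDerivAt (fun s p => sol a x s p) (fun p => (L (sol a x s)) p) s :=
    hasDerivAt_pi.mpr key
  exact ((PiLp.continuousLinearEquiv 2 ℝ (fun _ : Fin q × Fin 2 => ℝ)).symm.toContinuousLinearMap.hasFDerivAt.comp_hasDerivAt s key' : _)

lemma sol_zero (a : Fin q → ℝ) (x : EuclideanSpace ℝ (Fin q × Fin 2)) : sol a x 0 = x := by
  ext p
  rcases p with ⟨j, i⟩
  fin_cases i <;> simp [sol_apply]

lemma expFlow_apply (a : Fin q → ℝ) (x : EuclideanSpace ℝ (Fin q × Fin 2)) (t : ℝ) :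
    expFlow a t x = sol a x t := by
  set L := LinearMap.toContinuousLinearMap (Matrix.toEuclideanLin (blockDiagRot a)) with hL
  have hg : ∀ s : ℝ, HasDerivAt (fun u : ℝ => (NormedSpace.exp ((-u) • L)) (sol a x u)) 0 s := by
    intro s
    have hB : HasDerivAt (fun u : ℝ => NormedSpace.exp ((-u) • L))
        ((-1 : ℝ) • (NormedSpace.exp ((-s) • L) * L)) s := by
      have h1 := hasDerivAt_exp_smul_const (𝕂 := ℝ) L (-s)
      have h2 : HasDerivAt (fun u : ℝ => -u) (-1 : ℝ) s := (hasDerivAt_id s).neg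
      exact h1.scomp s h2
    have h3 := hB.clm_apply (hasDerivAt_sol a x s)
    have h4 : ((-1 : ℝ) • (NormedSpace.exp ((-s) • L) * L)) (sol a x s)
        + (NormedSpace.exp ((-s) • L)) (L (sol a x s)) = 0 := by
      simp [ContinuousLinearMap.mul_apply]
    rwa [h4] at h3
  have hdiff : Differentiable ℝ (fun u : ℝ => (NormedSpace.exp ((-u) • L)) (sol a x u)) :=
    fun s => (hg s).differentiableAt
  have hconst := is_const_of_deriv_eq_zero hdiff (fun s => (hg s).deriv) t 0
  have h0 : (NormedSpace.exp ((-(0:ℝ)) • L)) (sol a x 0) = x := by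
    rw [sol_zero, neg_zero]
    have hz : (0:ℝ) • L = 0 := zero_smul ℝ L
    rw [hz, NormedSpace.exp_zero]
    rfl
  rw [h0] at hconst
  have hcomm : Commute (t • L) ((-t) • L) := by
    show _ = _
    ext v
    simp [ContinuousLinearMap.mul_apply]
  have : NormedSpace.exp (t • L) * NormedSpace.exp ((-t) • L) = 1 := by
    rw [← NormedSpace.exp_add_of_commute_of_mem_ball (𝕂 := ℝ) hcomm
      ((NormedSpace.expSeries_radius_eq_top ℝ (EuclideanSpace ℝ (Fin q × Fin 2) →L[ℝ] EuclideanSpace ℝ (Fin q × Fin 2))).symm ▸ edist_lt_top _ _)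
      ((NormedSpace.expSeries_radius_eq_top ℝ (EuclideanSpace ℝ (Fin q × Fin 2) →L[ℝ] EuclideanSpace ℝ (Fin q × Fin 2))).symm ▸ edist_lt_top _ _)]
    have h5 : t • L + (-t) • L = ((t + -t) : ℝ) • L := (add_smul t (-t) L).symm
    rw [h5]
    rw [add_neg_cancel]
    have hz : (0:ℝ) • L = 0 := zero_smul ℝ L
    rw [hz, NormedSpace.exp_zero]
  calc expFlow a t x = (NormedSpace.exp (t • L)) ((NormedSpace.exp ((-t) • L)) (sol a x t)) := by
        rw [hconst]; rfl
    _ = ((NormedSpace.exp (t • L) * NormedSpace.exp ((-t) • L))) (sol a x t) := rfl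
    _ = sol a x t := by rw [this]; rfl



lemma mean_exp (μ : ℝ) :
    Tendsto (fun T : ℝ => (∫ t in (0:ℝ)..T, Complex.exp (μ * t * Complex.I)) / T) atTop
      (nhds (if μ = 0 then 1 else 0)) := by
  by_cases hμ : μ = 0
  · subst hμ
    simp only [if_pos rfl]
    have hev : ∀ᶠ T : ℝ in atTop, (1:ℂ) = (∫ t in (0:ℝ)..T, Complex.exp (0 * t * Complex.I)) / T := by
      filter_upwards [eventually_ge_atTop (1:ℝ)] with T hT
      have h1 : (∫ t in (0:ℝ)..T, Complex.exp (0 * t * Complex.I)) = T := by simp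
      rw [h1, div_self]
      exact Complex.ofReal_ne_zero.mpr (by linarith)
    exact Tendsto.congr' hev tendsto_const_nhds
  · simp only [if_neg hμ]
    have key : ∀ T : ℝ, (∫ t in (0:ℝ)..T, Complex.exp (μ * t * Complex.I)) =
        (Complex.exp ((μ * Complex.I) * T) - 1) / (μ * Complex.I) := by
      intro T
      have h1 : ∀ t : ℝ, (μ : ℂ) * t * Complex.I = (μ * Complex.I) * t := by intro t; ring
      simp_rw [h1]
      rw [integral_exp_mul_complex (by simp [hμ, Complex.I_ne_zero])]
      simp
    have hb : ∀ T : ℝ, ‖(Complex.exp ((μ * Complex.I) * T) - 1) / (μ * Complex.I)‖ ≤ 2 / |μ| := by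
      intro T
      have h2 : ‖Complex.exp ((μ * Complex.I) * T)‖ = 1 := by
        have h0 : (μ : ℂ) * Complex.I * T = ((μ * T : ℝ) : ℂ) * Complex.I := by push_cast; ring
        rw [h0, Complex.norm_exp_ofReal_mul_I]
      have h3 : ‖Complex.exp ((μ * Complex.I) * T) - 1‖ ≤ 2 := by
        calc ‖Complex.exp ((μ * Complex.I) * T) - 1‖
            ≤ ‖Complex.exp ((μ * Complex.I) * T)‖ + ‖(1:ℂ)‖ := norm_sub_le _ _
          _ ≤ 2 := by rw [h2]; norm_num
      rw [norm_div]
      have h4 : ‖(μ : ℂ) * Complex.I‖ = |μ| := by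
        simp
      rw [h4]
      have hμ' : 0 < |μ| := abs_pos.mpr hμ
      gcongr
    have hbound : ∀ᶠ T : ℝ in atTop,
        ‖(∫ t in (0:ℝ)..T, Complex.exp (μ * t * Complex.I)) / T‖ ≤ (2 / |μ|) * T⁻¹ := by
      filter_upwards [eventually_ge_atTop (1:ℝ)] with T hT
      rw [key T, norm_div]
      have : ‖(T:ℂ)‖ = T := by
        rw [Complex.norm_real, Real.norm_eq_abs, abs_of_pos (by linarith)]
      rw [this, div_eq_mul_inv]
      exact mul_le_mul_of_nonneg_right (hb T) (by positivity)
    have hlim : Tendsto (fun T : ℝ => (2 / |μ|) * T⁻¹) atTop (nhds 0) := by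
      simpa using tendsto_inv_atTop_zero.const_mul (2 / |μ|)
    exact squeeze_zero_norm' hbound hlim

lemma cont_exp_aux (μ : ℝ) : Continuous (fun t : ℝ => Complex.exp (μ * t * Complex.I)) := by
  fun_prop

lemma mean_finsum {ι : Type*} [Fintype ι] (γ : ι → ℂ) (μ : ι → ℝ) :
    Tendsto (fun T : ℝ =>
        (∫ t in (0:ℝ)..T, ∑ i : ι, γ i * Complex.exp (μ i * t * Complex.I)) / T) atTop
      (nhds (∑ i : ι, γ i * (if μ i = 0 then 1 else 0))) := by
  have hint : ∀ (i : ι) (T : ℝ),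
      IntervalIntegrable (fun t : ℝ => γ i * Complex.exp (μ i * t * Complex.I))
        MeasureTheory.volume 0 T :=
    fun i T => (continuous_const.mul (cont_exp_aux (μ i))).intervalIntegrable 0 T
  have key : ∀ T : ℝ,
      (∫ t in (0:ℝ)..T, ∑ i : ι, γ i * Complex.exp (μ i * t * Complex.I)) / T =
      ∑ i : ι, γ i * ((∫ t in (0:ℝ)..T, Complex.exp (μ i * t * Complex.I)) / T) := by
    intro T
    rw [intervalIntegral.integral_finset_sum (fun i _ => hint i T)]
    rw [Finset.sum_div]
    congr 1
    ext i
    rw [intervalIntegral.integral_const_mul, mul_div_assoc]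
  simp_rw [key]
  exact tendsto_finset_sum _ (fun i _ => (mean_exp (μ i)).const_mul (γ i))

section indep
variable {q : ℕ} {a : Fin q → ℝ}

lemma int_indep (ha : LinearIndependent ℚ a) (m : Fin q → ℤ)
    (h : ∑ j : Fin q, (m j : ℝ) * a j = 0) : ∀ j, m j = 0 := by
  intro j
  have h2 : ∑ i : Fin q, ((m i : ℚ)) • a i = 0 := by
    have he : ∀ i : Fin q, ((m i : ℚ)) • a i = (m i : ℝ) * a i := by
      intro i; rw [Rat.smul_def]; norm_num
    rw [Finset.sum_congr rfl (fun i _ => he i), h]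
  have := Fintype.linearIndependent_iff.mp ha (fun i => (m i : ℚ)) h2 j
  exact_mod_cast this

lemma delta_sum (i : Fin q) : ∑ l : Fin q, (if i = l then (1:ℝ) else 0) * a l = a i := by
  rw [Finset.sum_eq_single i] <;> simp +contextual [eq_comm]

lemma combo_eval (c₁ c₂ c₃ : ℤ) (j k J : Fin q) :
    ∑ l : Fin q, ((((c₁ * if j = l then 1 else 0) + (c₂ * if k = l then 1 else 0)
      + (c₃ * if J = l then 1 else 0) : ℤ) : ℝ)) * a l
      = c₁ * a j + c₂ * a k + c₃ * a J := by
  have : ∀ l : Fin q, ((((c₁ * if j = l then 1 else 0) + (c₂ * if k = l then 1 else 0)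
      + (c₃ * if J = l then 1 else 0) : ℤ) : ℝ)) * a l
      = c₁ * ((if j = l then (1:ℝ) else 0) * a l) + c₂ * ((if k = l then (1:ℝ) else 0) * a l)
        + c₃ * ((if J = l then (1:ℝ) else 0) * a l) := by
    intro l
    push_cast
    try ring
  simp_rw [this, Finset.sum_add_distrib, ← Finset.mul_sum, delta_sum]

lemma freq_zero_iff (ha : LinearIndependent ℚ a) (j k J : Fin q) :
    2 * a J - a j - a k = 0 ↔ (j = J ∧ k = J) := by
  constructor
  · intro h
    have h' : ∑ l : Fin q, ((((-1 : ℤ) * if j = l then 1 else 0) + ((-1 : ℤ) * if k = l then 1 else 0)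
        + ((2 : ℤ) * if J = l then 1 else 0) : ℤ) : ℝ) * a l = 0 := by
      rw [combo_eval]; push_cast; linarith
    have hz := int_indep ha _ h'
    have hJ := hz J
    have hj := hz j
    by_cases h1 : j = J <;> by_cases h2 : k = J <;> simp [h1, h2] at hJ ⊢ <;> omega
  · rintro ⟨rfl, rfl⟩; ring

lemma freq_ne_add (ha : LinearIndependent ℚ a) (j k : Fin q) : a j + a k ≠ 0 := by
  intro h
  have h' : ∑ l : Fin q, ((((1 : ℤ) * if j = l then 1 else 0) + ((1 : ℤ) * if k = l then 1 else 0)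
      + ((0 : ℤ) * if j = l then 1 else 0) : ℤ) : ℝ) * a l = 0 := by
    rw [combo_eval]; push_cast; linarith
  have hz := int_indep ha _ h' j
  by_cases h2 : k = j <;> simp [h2] at hz

lemma freq_ne_add2 (ha : LinearIndependent ℚ a) (j k J : Fin q) : a j + a k + 2 * a J ≠ 0 := by
  intro h
  have h' : ∑ l : Fin q, ((((1 : ℤ) * if j = l then 1 else 0) + ((1 : ℤ) * if k = l then 1 else 0)
      + ((2 : ℤ) * if J = l then 1 else 0) : ℤ) : ℝ) * a l = 0 := by
    rw [combo_eval]; push_cast; linarith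
  have hz := int_indep ha _ h' J
  by_cases h1 : j = J <;> by_cases h2 : k = J <;> simp [h1, h2] at hz

end indep

lemma exp_mul_exp (α β t : ℝ) :
    Complex.exp (α * t * Complex.I) * Complex.exp (β * t * Complex.I)
      = Complex.exp (((α + β : ℝ) : ℂ) * t * Complex.I) := by
  rw [← Complex.exp_add]
  congr 1
  push_cast
  ring

lemma conj_exp (α t : ℝ) :
    (starRingEnd ℂ) (Complex.exp (α * t * Complex.I))
      = Complex.exp (((-α : ℝ) : ℂ) * t * Complex.I) := by
  rw [← Complex.exp_conj]
  congr 1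
  simp [_root_.map_mul, Complex.conj_ofReal, Complex.conj_I]
  try (push_cast; ring)

lemma mul_cis_re (u v θ : ℝ) :
    (((u:ℂ) + (v:ℂ) * Complex.I) * Complex.exp ((θ:ℂ) * Complex.I)).re
      = u * Real.cos θ - v * Real.sin θ := by
  rw [Complex.exp_mul_I, ← Complex.ofReal_cos, ← Complex.ofReal_sin]
  simp [Complex.mul_re, Complex.add_re, Complex.add_im, Complex.mul_im,
    Complex.cos_ofReal_re, Complex.sin_ofReal_re]

lemma mul_cis_im (u v θ : ℝ) :
    (((u:ℂ) + (v:ℂ) * Complex.I) * Complex.exp ((θ:ℂ) * Complex.I)).im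
      = u * Real.sin θ + v * Real.cos θ := by
  rw [Complex.exp_mul_I, ← Complex.ofReal_cos, ← Complex.ofReal_sin]
  simp [Complex.mul_re, Complex.add_re, Complex.add_im, Complex.mul_im,
    Complex.cos_ofReal_re, Complex.sin_ofReal_re]

end aux

section aux2
variable {q : ℕ}

def ccx (x : EuclideanSpace ℝ (Fin q × Fin 2)) (j : Fin q) : ℂ :=
  (x (j, 0) : ℂ) + (x (j, 1) : ℂ) * Complex.I

def Sf (a : Fin q → ℝ) (x : EuclideanSpace ℝ (Fin q × Fin 2)) (t : ℝ) : ℂ :=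
  ∑ j : Fin q, ccx x j * Complex.exp (a j * t * Complex.I)

lemma cont_Sf (a : Fin q → ℝ) (x : EuclideanSpace ℝ (Fin q × Fin 2)) :
    Continuous (Sf a x) :=
  continuous_finset_sum _ fun j _ => continuous_const.mul (cont_exp_aux (a j))

lemma C0_eq (a : Fin q → ℝ) (x : EuclideanSpace ℝ (Fin q × Fin 2)) (t : ℝ) :
    C₀fun (sol a x t) = (Sf a x t).re := by
  rw [C₀fun, Sf, Complex.re_sum]
  refine Finset.sum_congr rfl fun j _ => ?_
  rw [sol_apply]
  have h1 : (a j : ℂ) * t * Complex.I = ((a j * t : ℝ) : ℂ) * Complex.I := by push_cast; ring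
  rw [ccx, h1, mul_cis_re]
  simp

lemma C1_eq (a : Fin q → ℝ) (x : EuclideanSpace ℝ (Fin q × Fin 2)) (t : ℝ) :
    C₁fun (sol a x t) = (Sf a x t).im := by
  rw [C₁fun, Sf, Complex.im_sum]
  refine Finset.sum_congr rfl fun j _ => ?_
  rw [sol_apply]
  have h1 : (a j : ℂ) * t * Complex.I = ((a j * t : ℝ) : ℂ) * Complex.I := by push_cast; ring
  rw [ccx, h1, mul_cis_im]
  simp

lemma Sf_sq (a : Fin q → ℝ) (x : EuclideanSpace ℝ (Fin q × Fin 2)) (t : ℝ) :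
    (Sf a x t) ^ 2 = ∑ p : Fin q × Fin q,
      (ccx x p.1 * ccx x p.2) * Complex.exp (((a p.1 + a p.2 : ℝ) : ℂ) * t * Complex.I) := by
  rw [sq, Sf, Finset.sum_mul_sum, Fintype.sum_prod_type]
  refine Finset.sum_congr rfl fun j _ => Finset.sum_congr rfl fun k _ => ?_
  rw [← exp_mul_exp]
  ring

lemma conjSq_mul_W (a : Fin q → ℝ) (x : EuclideanSpace ℝ (Fin q × Fin 2)) (J : Fin q) (t : ℝ) :
    (starRingEnd ℂ) ((Sf a x t) ^ 2) *
        ((ccx x J) ^ 2 * Complex.exp (((2 * a J : ℝ) : ℂ) * t * Complex.I)) =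
      ∑ p : Fin q × Fin q,
        ((starRingEnd ℂ) (ccx x p.1 * ccx x p.2) * (ccx x J) ^ 2) *
          Complex.exp (((2 * a J - a p.1 - a p.2 : ℝ) : ℂ) * t * Complex.I) := by
  rw [Sf_sq, map_sum, Finset.sum_mul]
  refine Finset.sum_congr rfl fun p _ => ?_
  rw [_root_.map_mul ((starRingEnd ℂ)) _ (Complex.exp _), conj_exp]
  have h2 : (2 * a J - a p.1 - a p.2 : ℝ) = (-(a p.1 + a p.2)) + 2 * a J := by ring
  rw [h2, ← exp_mul_exp]
  ring

lemma sq_mul_W (a : Fin q → ℝ) (x : EuclideanSpace ℝ (Fin q × Fin 2)) (J : Fin q) (t : ℝ) :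
    (Sf a x t) ^ 2 * ((ccx x J) ^ 2 * Complex.exp (((2 * a J : ℝ) : ℂ) * t * Complex.I)) =
      ∑ p : Fin q × Fin q,
        ((ccx x p.1 * ccx x p.2) * (ccx x J) ^ 2) *
          Complex.exp (((a p.1 + a p.2 + 2 * a J : ℝ) : ℂ) * t * Complex.I) := by
  rw [Sf_sq, Finset.sum_mul]
  refine Finset.sum_congr rfl fun p _ => ?_
  rw [mul_mul_mul_comm, exp_mul_exp]

end aux2

/-- If `q ≥ 1` and `a₁, …, a_q` are rationally independent, then for
every nonzero `x ∈ ℝ^{2q}` there is a time `t ≥ 0` at which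
`C₀(exp(tA)x) · C₁(exp(tA)x) > 0`; in particular every nonzero orbit of `ẋ = Ax` leaves
the cone `{x : C₀(x)·C₁(x) ≤ 0}`. -/
theorem orbit_leaves_cone {q : ℕ} (hq : 1 ≤ q) (a : Fin q → ℝ)
    (ha : LinearIndependent ℚ a) :
    ∀ x : EuclideanSpace ℝ (Fin q × Fin 2), x ≠ 0 →
      ∃ t : ℝ, 0 ≤ t ∧
        (0 < C₀fun (expFlow a t x) * C₁fun (expFlow a t x) ∧
          expFlow a t x ∉ {y : EuclideanSpace ℝ (Fin q × Fin 2) |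
            C₀fun y * C₁fun y ≤ 0}) := by
  intro x hx
  suffices hgood : ∃ t : ℝ, 0 ≤ t ∧ 0 < C₀fun (expFlow a t x) * C₁fun (expFlow a t x) by
    obtain ⟨t, ht, hp⟩ := hgood
    exact ⟨t, ht, hp, by simpa [Set.mem_setOf_eq, not_le] using hp⟩
  by_contra hcon
  push_neg at hcon
  -- hcon : ∀ t, 0 ≤ t → C₀fun (expFlow a t x) * C₁fun (expFlow a t x) ≤ 0
  -- pick a block with nonzero coefficient
  have hJ : ∃ J : Fin q, ccx x J ≠ 0 := by
    by_contra hno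
    push_neg at hno
    apply hx
    ext p
    rcases p with ⟨j, i⟩
    have h0 : (ccx x j).re = 0 ∧ (ccx x j).im = 0 := by
      rw [hno j]; simp
    have hre : x (j, 0) = 0 := by simpa [ccx] using h0.1
    have him : x (j, 1) = 0 := by simpa [ccx] using h0.2
    fin_cases i
    · simpa using hre
    · simpa using him
  obtain ⟨J, hcJ⟩ := hJ
  set S : ℝ → ℂ := Sf a x with hS
  set c : Fin q → ℂ := ccx x with hc
  set f : ℝ → ℝ := fun t => ((S t) ^ 2).im / 2 with hfdef
  set w : ℝ → ℂ := fun t => (c J) ^ 2 * Complex.exp (((2 * a J : ℝ) : ℂ) * t * Complex.I)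
    with hwdef
  have hfle : ∀ t : ℝ, 0 ≤ t → f t ≤ 0 := by
    intro t ht
    have h1 : C₀fun (expFlow a t x) * C₁fun (expFlow a t x) = f t := by
      rw [expFlow_apply, C0_eq, C1_eq, hfdef]
      simp only [hS, sq, Complex.mul_im]
      ring
    rw [← h1]
    exact hcon t ht
  -- continuity facts
  have hScont : Continuous S := cont_Sf a x
  have hwcont : Continuous w := continuous_const.mul (cont_exp_aux (2 * a J))
  have hfcont : Continuous f := (Complex.continuous_im.comp (hScont.pow 2)).div_const 2
  have hG1cont : Continuous (fun t => (starRingEnd ℂ) ((S t) ^ 2) * w t) :=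
    ((Complex.continuous_conj.comp (hScont.pow 2))).mul hwcont
  have hG2cont : Continuous (fun t => (S t) ^ 2 * w t) := (hScont.pow 2).mul hwcont
  -- complex means
  have hmean1 : Tendsto (fun T : ℝ =>
      (∫ t in (0:ℝ)..T, (starRingEnd ℂ) ((S t) ^ 2) * w t) / T) atTop
      (nhds ((starRingEnd ℂ) ((c J) ^ 2) * (c J) ^ 2)) := by
    have hid : ∀ t : ℝ, (starRingEnd ℂ) ((S t) ^ 2) * w t =
        ∑ p : Fin q × Fin q, ((starRingEnd ℂ) (c p.1 * c p.2) * (c J) ^ 2) *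
          Complex.exp (((2 * a J - a p.1 - a p.2 : ℝ) : ℂ) * t * Complex.I) :=
      fun t => conjSq_mul_W a x J t
    simp_rw [hid]
    have := mean_finsum (fun p : Fin q × Fin q => (starRingEnd ℂ) (c p.1 * c p.2) * (c J) ^ 2)
      (fun p : Fin q × Fin q => 2 * a J - a p.1 - a p.2)
    convert this using 2
    rw [Finset.sum_eq_single (J, J)]
    · have hz : 2 * a J - a J - a J = 0 := by ring
      rw [if_pos hz]
      simp only [_root_.map_pow, _root_.map_mul]
      ring
    · intro p _ hp
      have : ¬(2 * a J - a p.1 - a p.2 = 0) := by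
        rw [freq_zero_iff ha]
        intro ⟨h1, h2⟩
        exact hp (Prod.ext h1 h2)
      simp [this]
    · simp
  have hmean2 : Tendsto (fun T : ℝ =>
      (∫ t in (0:ℝ)..T, (S t) ^ 2 * w t) / T) atTop (nhds 0) := by
    have hid : ∀ t : ℝ, (S t) ^ 2 * w t =
        ∑ p : Fin q × Fin q, ((c p.1 * c p.2) * (c J) ^ 2) *
          Complex.exp (((a p.1 + a p.2 + 2 * a J : ℝ) : ℂ) * t * Complex.I) :=
      fun t => sq_mul_W a x J t
    simp_rw [hid]
    have := mean_finsum (fun p : Fin q × Fin q => (c p.1 * c p.2) * (c J) ^ 2)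
      (fun p : Fin q × Fin q => a p.1 + a p.2 + 2 * a J)
    convert this using 2
    rw [Finset.sum_eq_zero]
    intro p _
    simp [freq_ne_add2 ha p.1 p.2 J]
  have hmean0 : Tendsto (fun T : ℝ =>
      (∫ t in (0:ℝ)..T, (S t) ^ 2) / T) atTop (nhds 0) := by
    have hid : ∀ t : ℝ, (S t) ^ 2 =
        ∑ p : Fin q × Fin q, (c p.1 * c p.2) *
          Complex.exp (((a p.1 + a p.2 : ℝ) : ℂ) * t * Complex.I) :=
      fun t => Sf_sq a x t
    simp_rw [hid]
    have := mean_finsum (fun p : Fin q × Fin q => c p.1 * c p.2)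
      (fun p : Fin q × Fin q => a p.1 + a p.2)
    convert this using 2
    rw [Finset.sum_eq_zero]
    intro p _
    simp [freq_ne_add ha p.1 p.2]
  -- real mean of f is 0
  have hmeanf : Tendsto (fun T : ℝ => (∫ t in (0:ℝ)..T, f t) / T) atTop (nhds 0) := by
    have hint : ∀ T : ℝ, (∫ t in (0:ℝ)..T, f t) = (∫ t in (0:ℝ)..T, (S t) ^ 2).im / 2 := by
      intro T
      rw [hfdef]
      simp only
      rw [intervalIntegral.integral_div]
      congr 1
      have hii : IntervalIntegrable (fun t => (S t) ^ 2) MeasureTheory.volume 0 T :=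
        (hScont.pow 2).intervalIntegrable 0 T
      have := ContinuousLinearMap.intervalIntegral_comp_comm (𝕜 := ℝ) Complex.imCLM hii
      simpa using this
    simp_rw [hint]
    have h2 : ∀ T : ℝ, (∫ t in (0:ℝ)..T, (S t) ^ 2).im / 2 / T =
        (((∫ t in (0:ℝ)..T, (S t) ^ 2) / (T:ℂ)).im) / 2 := by
      intro T
      rw [Complex.div_ofReal_im]
      ring
    simp_rw [h2]
    have h3 := (Complex.continuous_im.tendsto 0).comp hmean0
    simpa using h3.div_const 2
  -- mean of F = f * w.im
  have hmeanF : Tendsto (fun T : ℝ => (∫ t in (0:ℝ)..T, f t * (w t).im) / T) atTop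
      (nhds (((starRingEnd ℂ) ((c J) ^ 2) * (c J) ^ 2).re / 4)) := by
    have hptw : ∀ t : ℝ, f t * (w t).im =
        ((starRingEnd ℂ) ((S t) ^ 2) * w t).re / 4 - ((S t) ^ 2 * w t).re / 4 := by
      intro t
      rw [hfdef]
      simp only [Complex.mul_re, Complex.conj_re, Complex.conj_im]
      ring
    simp_rw [hptw]
    have hi1 : ∀ T : ℝ, (∫ t in (0:ℝ)..T,
        (((starRingEnd ℂ) ((S t) ^ 2) * w t).re / 4 - ((S t) ^ 2 * w t).re / 4)) =
        (∫ t in (0:ℝ)..T, (starRingEnd ℂ) ((S t) ^ 2) * w t).re / 4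
          - (∫ t in (0:ℝ)..T, (S t) ^ 2 * w t).re / 4 := by
      intro T
      have hc1 : IntervalIntegrable (fun t => ((starRingEnd ℂ) ((S t) ^ 2) * w t).re / 4)
          MeasureTheory.volume 0 T :=
        ((Complex.continuous_re.comp hG1cont).div_const 4).intervalIntegrable 0 T
      have hc2 : IntervalIntegrable (fun t => ((S t) ^ 2 * w t).re / 4)
          MeasureTheory.volume 0 T :=
        ((Complex.continuous_re.comp hG2cont).div_const 4).intervalIntegrable 0 T
      rw [intervalIntegral.integral_sub hc1 hc2]
      congr 1
      · rw [intervalIntegral.integral_div]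
        congr 1
        simpa using ContinuousLinearMap.intervalIntegral_comp_comm (𝕜 := ℝ) Complex.reCLM
          (hG1cont.intervalIntegrable 0 T)
      · rw [intervalIntegral.integral_div]
        congr 1
        simpa using ContinuousLinearMap.intervalIntegral_comp_comm (𝕜 := ℝ) Complex.reCLM
          (hG2cont.intervalIntegrable 0 T)
    simp_rw [hi1]
    have h2 : ∀ T : ℝ, ((∫ t in (0:ℝ)..T, (starRingEnd ℂ) ((S t) ^ 2) * w t).re / 4
          - (∫ t in (0:ℝ)..T, (S t) ^ 2 * w t).re / 4) / T =
        (((∫ t in (0:ℝ)..T, (starRingEnd ℂ) ((S t) ^ 2) * w t) / (T:ℂ)).re / 4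
          - ((∫ t in (0:ℝ)..T, (S t) ^ 2 * w t) / (T:ℂ)).re / 4) := by
      intro T
      rw [Complex.div_ofReal_re, Complex.div_ofReal_re]
      ring
    simp_rw [h2]
    have h3 := ((Complex.continuous_re.tendsto _).comp hmean1).div_const 4
    have h4 := ((Complex.continuous_re.tendsto _).comp hmean2).div_const 4
    have h5 := h3.sub h4
    simpa using h5
  -- upper bound on mean of F
  set K : ℝ := ‖(c J) ^ 2‖ with hK
  have hwim : ∀ t : ℝ, |(w t).im| ≤ K := by
    intro t
    refine (Complex.abs_im_le_norm _).trans ?_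
    rw [hwdef]
    simp only [norm_mul]
    have : ‖(Complex.exp (((2 * a J : ℝ) : ℂ) * t * Complex.I))‖ = 1 := by
      have h0 : ((2 * a J : ℝ) : ℂ) * t * Complex.I = ((2 * a J * t : ℝ) : ℂ) * Complex.I := by
        push_cast; ring
      rw [h0, Complex.norm_exp_ofReal_mul_I]
    rw [this, mul_one, hK]
  have hFbound : ∀ t : ℝ, 0 ≤ t → f t * (w t).im ≤ K * (-f t) := by
    intro t ht
    have hft := hfle t ht
    calc f t * (w t).im ≤ |f t * (w t).im| := le_abs_self _
      _ = (-f t) * |(w t).im| := by rw [abs_mul, abs_of_nonpos hft]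
      _ ≤ (-f t) * K := mul_le_mul_of_nonneg_left (hwim t) (by linarith)
      _ = K * (-f t) := by ring
  have hUb : ∀ᶠ T : ℝ in atTop,
      (∫ t in (0:ℝ)..T, f t * (w t).im) / T ≤ K * ((∫ t in (0:ℝ)..T, -f t) / T) := by
    filter_upwards [eventually_ge_atTop (1:ℝ)] with T hT
    have hT0 : (0:ℝ) < T := by linarith
    have hmono : (∫ t in (0:ℝ)..T, f t * (w t).im) ≤ ∫ t in (0:ℝ)..T, K * (-f t) := by
      apply intervalIntegral.integral_mono_on (le_of_lt hT0)
      · exact (hfcont.mul (Complex.continuous_im.comp hwcont)).intervalIntegrable 0 T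
      · exact (continuous_const.mul hfcont.neg).intervalIntegrable 0 T
      · intro u hu
        exact hFbound u hu.1
    have : (∫ t in (0:ℝ)..T, K * (-f t)) = K * (∫ t in (0:ℝ)..T, -f t) :=
      intervalIntegral.integral_const_mul K _
    rw [← mul_div_assoc, ← this]
    exact div_le_div_of_nonneg_right hmono hT0.le |> id
  have hRlim : Tendsto (fun T : ℝ => K * ((∫ t in (0:ℝ)..T, -f t) / T)) atTop (nhds 0) := by
    have h1 : ∀ T : ℝ, (∫ t in (0:ℝ)..T, -f t) = -(∫ t in (0:ℝ)..T, f t) := by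
      intro T
      exact intervalIntegral.integral_neg
    have h2 : ∀ T : ℝ, K * ((∫ t in (0:ℝ)..T, -f t) / T) =
        -(K * ((∫ t in (0:ℝ)..T, f t) / T)) := by
      intro T
      rw [h1 T]
      ring
    simp_rw [h2]
    simpa using (hmeanf.const_mul K).neg
  have hle := le_of_tendsto_of_tendsto hmeanF hRlim hUb
  -- but the limit is positive
  have hpos : 0 < ((starRingEnd ℂ) ((c J) ^ 2) * (c J) ^ 2).re / 4 := by
    have h1 : (starRingEnd ℂ) ((c J) ^ 2) * (c J) ^ 2 = (Complex.normSq ((c J) ^ 2) : ℂ) :=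
      Complex.normSq_eq_conj_mul_self.symm
    rw [h1]
    have h2 : 0 < Complex.normSq ((c J) ^ 2) :=
      Complex.normSq_pos.mpr (pow_ne_zero 2 hcJ)
    simp only [Complex.ofReal_re]
    linarith
  linarith

end
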